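/- A directed graph G is dichotomic if and only if there exists a labeling ℓ : V(G) → ({0,…,n}})² (where n = |V(G)|) such that for all u, v ∈ V(G): (u,v) ∈ E(G) iff ℓ(u)₁ = ℓ(v)₂. -/
import Mathlib


/-- A directed graph is dichotomic if any two in-neighborhoods are disjoint or
equal, and likewise for out-neighborhoods. -/
def Dichotomic {n : ℕ} (E : Fin n → Fin n → Prop) : Prop :=
  ∀ u v : Fin n,
    ({w | E u w} = {w | E v w} ∨ {w | E u w} ∩ {w | E v w} = (∅ : Set (Fin n))) ∧
    ({w | E w u} = {w | E w v} ∨ {w | E w u} ∩ {w | E w v} = (∅ : Set (Fin n)))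

/-- A directed graph `G` on `n` vertices is dichotomic iff there is a labeling
`ℓ : V(G) → {0,…,n}²` with `(u,v) ∈ E(G)` iff `ℓ(u)₁ = ℓ(v)₂`. -/
theorem stmt_10 (n : ℕ) (E : Fin n → Fin n → Prop) :
    Dichotomic E ↔
      ∃ ℓ : Fin n → Fin (n + 1) × Fin (n + 1),
        ∀ u v : Fin n, E u v ↔ (ℓ u).1 = (ℓ v).2 := by
  classical
  constructor
  · intro hD
    -- out-neighborhoods as finsets
    set Nout : Fin n → Finset (Fin n) := fun u => Finset.univ.filter (fun w => E u w) with hN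
    have hmem : ∀ u w, w ∈ Nout u ↔ E u w := by
      intro u w; simp [hN]
    -- key consequence of dichotomy
    have outEq : ∀ u u' v, E u v → E u' v → Nout u = Nout u' := by
      intro u u' v h h'
      rcases (hD u u').1 with heq | hdisj
      · ext w; simp only [hmem]
        constructor
        · intro hw; exact (Set.ext_iff.mp heq w).mp hw
        · intro hw; exact (Set.ext_iff.mp heq w).mpr hw
      · exfalso
        have : v ∈ ({w | E u w} ∩ {w | E u' w} : Set (Fin n)) := ⟨h, h'⟩
        rw [hdisj] at this
        exact this
    -- spare value for vertices with empty out-neighborhood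
    set blank : Fin (n + 1) :=
      if h0 : ∃ v₀ : Fin n, ∀ w, ¬ E w v₀ then (h0.choose).castSucc else Fin.last n
      with hblank
    set ℓ₁ : Fin n → Fin (n + 1) := fun u =>
      if h : (Nout u).Nonempty then ((Nout u).min' h).castSucc else blank with hℓ₁
    set ℓ₂ : Fin n → Fin (n + 1) := fun v =>
      if h : ∃ u, E u v then
        ((Nout h.choose).min' ⟨v, (hmem _ _).mpr h.choose_spec⟩).castSucc
      else Fin.last n with hℓ₂
    refine ⟨fun u => (ℓ₁ u, ℓ₂ u), fun u v => ?_⟩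
    simp only
    constructor
    · intro huv
      have hne : (Nout u).Nonempty := ⟨v, (hmem _ _).mpr huv⟩
      have hex : ∃ u', E u' v := ⟨u, huv⟩
      rw [hℓ₁, hℓ₂]
      simp only [hne, hex, dif_pos]
      have : Nout u = Nout hex.choose := outEq u hex.choose v huv hex.choose_spec
      congr 1
      simp [this]
    · intro heq
      by_contra huv
      by_cases hne : (Nout u).Nonempty
      · -- ℓ₁ u = castSucc (min' (Nout u))
        rw [hℓ₁] at heq
        simp only [hne, dif_pos] at heq
        by_cases hex : ∃ u', E u' v
        · rw [hℓ₂] at heq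
          simp only [hex, dif_pos] at heq
          have hm := Fin.castSucc_injective _ heq
          set u₀ := hex.choose with hu₀
          have hmin1 : (Nout u).min' hne ∈ Nout u := Finset.min'_mem _ _
          have hmin2 : (Nout u).min' hne ∈ Nout u₀ := by
            rw [hm]; exact Finset.min'_mem _ _
          have hNN : Nout u = Nout u₀ :=
            outEq u u₀ _ ((hmem _ _).mp hmin1) ((hmem _ _).mp hmin2)
          have : v ∈ Nout u := by
            rw [hNN]; exact (hmem _ _).mpr hex.choose_spec
          exact huv ((hmem _ _).mp this)
        · rw [hℓ₂] at heq
          simp only [hex, dif_neg, not_false_iff] at heq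
          exact absurd heq (Fin.castSucc_lt_last _).ne
      · -- Nout u empty, ℓ₁ u = blank
        rw [hℓ₁] at heq
        simp only [hne, dif_neg, not_false_iff] at heq
        by_cases h0 : ∃ v₀ : Fin n, ∀ w, ¬ E w v₀
        · rw [hblank] at heq
          simp only [h0, dif_pos] at heq
          by_cases hex : ∃ u', E u' v
          · rw [hℓ₂] at heq
            simp only [hex, dif_pos] at heq
            have hm := Fin.castSucc_injective _ heq
            -- h0.choose has no in-neighbor, but min' ∈ Nout hex.choose
            have : (Nout hex.choose).min' ⟨v, (hmem _ _).mpr hex.choose_spec⟩ ∈ Nout hex.choose :=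
              Finset.min'_mem _ _
            rw [← hm] at this
            exact h0.choose_spec hex.choose ((hmem _ _).mp this)
          · rw [hℓ₂] at heq
            simp only [hex, dif_neg, not_false_iff] at heq
            exact absurd heq (Fin.castSucc_lt_last _).ne
        · rw [hblank] at heq
          simp only [h0, dif_neg, not_false_iff] at heq
          have hex : ∃ u', E u' v := by
            push_neg at h0
            obtain ⟨w, hw⟩ := h0 v
            exact ⟨w, hw⟩
          rw [hℓ₂] at heq
          simp only [hex, dif_pos] at heq
          exact absurd heq.symm (Fin.castSucc_lt_last _).ne
  · rintro ⟨ℓ, hℓ⟩ u v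
    constructor
    · by_cases h : (ℓ u).1 = (ℓ v).1
      · left; ext w; simp only [Set.mem_setOf_eq, hℓ, h]
      · right; ext w
        simp only [Set.mem_inter_iff, Set.mem_setOf_eq, hℓ, Set.mem_empty_iff_false, iff_false]
        rintro ⟨h1, h2⟩
        exact h (h1.trans h2.symm)
    · by_cases h : (ℓ u).2 = (ℓ v).2
      · left; ext w; simp only [Set.mem_setOf_eq, hℓ, h]
      · right; ext w
        simp only [Set.mem_inter_iff, Set.mem_setOf_eq, hℓ, Set.mem_empty_iff_false, iff_false]
        rintro ⟨h1, h2⟩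
        exact h (h1.symm.trans h2)
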